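/- For any graph H on n vertices with e(H) edges, the number of independent sets satisfies i(H) ≥ 2^n · (3/4)^{e(H)}. -/

import Mathlib

open SimpleGraph Finset

open scoped Classical

noncomputable def indepCount {V : Type*} (H : SimpleGraph V) : ℕ :=
  Nat.card {s : Finset V // ∀ u ∈ s, ∀ v ∈ s, ¬ H.Adj u v}

noncomputable def indepFinset {V : Type*} [Fintype V] (H : SimpleGraph V) : Finset (Finset V) :=
  Finset.univ.filter (fun S : Finset V => ∀ u ∈ S, ∀ v ∈ S, ¬ H.Adj u v)

lemma indepCount_eq_card {V : Type*} [Fintype V] (H : SimpleGraph V) :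
    indepCount H = (indepFinset H).card := by
  rw [indepCount, Nat.card_eq_fintype_card, indepFinset, Fintype.card_subtype]

lemma four_mul_le {V : Type*} [Fintype V] (H : SimpleGraph V) (u v : V) (hne : u ≠ v) :
    4 * ((indepFinset H).filter (fun S => u ∈ S ∧ v ∈ S)).card ≤ (indepFinset H).card := by
  set A := (indepFinset H).filter (fun S => u ∈ S ∧ v ∈ S) with hA
  have hrecover : ∀ S ∈ A, ∀ k : Fin 4,
      insert u (insert v ((fun p : Finset V × Fin 4 =>
        match p.2 with
        | 0 => p.1
        | 1 => p.1.erase u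
        | 2 => p.1.erase v
        | 3 => (p.1.erase u).erase v) (S, k))) = S := by
    intro S hS k
    simp only [hA, mem_filter] at hS
    obtain ⟨-, hu, hv⟩ := hS
    have hvu : v ∈ S.erase u := Finset.mem_erase.2 ⟨Ne.symm hne, hv⟩
    fin_cases k <;> simp [Finset.insert_erase, hu, hv, hvu,
      Finset.insert_eq_self.2 hu, Finset.insert_eq_self.2 hv]
  calc 4 * A.card = (A ×ˢ (Finset.univ : Finset (Fin 4))).card := by
        rw [Finset.card_product]; simp [mul_comm]
    _ ≤ (indepFinset H).card := by
        apply Finset.card_le_card_of_injOn (fun p : Finset V × Fin 4 =>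
          match p.2 with
          | 0 => p.1
          | 1 => p.1.erase u
          | 2 => p.1.erase v
          | 3 => (p.1.erase u).erase v)
        · rintro ⟨S, k⟩ hp
          simp only [Finset.mem_coe, Finset.mem_product] at hp
          obtain ⟨hSA, -⟩ := hp
          simp only [hA, mem_filter, indepFinset, Finset.mem_univ, true_and, Finset.mem_coe] at hSA ⊢
          obtain ⟨hind, -, -⟩ := hSA
          have hsub : ∀ T : Finset V, T ⊆ S → ∀ a ∈ T, ∀ b ∈ T, ¬ H.Adj a b :=
            fun T hT a ha b hb => hind a (hT ha) b (hT hb)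
          fin_cases k
          · exact hind
          · exact hsub _ (Finset.erase_subset _ _)
          · exact hsub _ (Finset.erase_subset _ _)
          · exact hsub _ ((Finset.erase_subset _ _).trans (Finset.erase_subset _ _))
        · rintro ⟨S, k⟩ hp ⟨T, l⟩ hq h
          simp only [Finset.coe_product, Set.mem_prod, Finset.mem_coe] at hp hq
          have hST : S = T := by
            rw [← hrecover S hp.1 k, ← hrecover T hq.1 l, h]
          subst hST
          simp only [hA, mem_filter] at hp
          obtain ⟨⟨-, hu, hv⟩, -⟩ := hp
          have hvu : v ≠ u := Ne.symm hne
          have hkl : k = l := by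
            clear hrecover hq
            fin_cases k <;> fin_cases l <;> (try rfl) <;> exfalso <;>
              simp only at h <;> rw [Finset.ext_iff] at h <;>
              (have h1 := h u; have h2 := h v;
               simp [hu, hv, hne, hvu, Finset.mem_erase] at h1 h2)
          rw [hkl]

lemma key {V : Type*} [Fintype V] : ∀ (e : ℕ) (H : SimpleGraph V),
    Nat.card H.edgeSet = e →
    3 ^ e * 2 ^ Fintype.card V ≤ 4 ^ e * (indepFinset H).card := by
  intro e
  induction e with
  | zero =>
    intro H he
    have hemp : H.edgeSet = ∅ := by
      rcases Set.eq_empty_or_nonempty H.edgeSet with h | h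
      · exact h
      · exfalso
        have := Nat.card_pos_iff.2 ⟨Set.nonempty_coe_sort.2 h, (Set.toFinite _).to_subtype⟩
        omega
    have hbot : H = ⊥ := SimpleGraph.edgeSet_eq_empty.1 hemp
    subst hbot
    simp [indepFinset, Finset.filter_true_of_mem, Finset.card_univ, Fintype.card_finset]
  | succ e ih =>
    intro H he
    have hne : H.edgeSet.Nonempty := by
      rcases Set.eq_empty_or_nonempty H.edgeSet with h | h
      · rw [h] at he; simp at he
      · exact h
    obtain ⟨w, hw⟩ := hne
    induction w using Sym2.ind with
    | _ u v =>
    have hw' := hw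
    rw [SimpleGraph.mem_edgeSet] at hw
    have huv : u ≠ v := hw.ne
    set H' := H.deleteEdges {s(u, v)} with hH'
    have hE' : Nat.card H'.edgeSet = e := by
      rw [hH', SimpleGraph.edgeSet_deleteEdges, Nat.card_coe_set_eq,
        Set.ncard_diff_singleton_of_mem hw']
      rw [Nat.card_coe_set_eq] at he
      omega
    have hIH := ih H' hE'
    have hsplit : (indepFinset H').filter (fun S => ¬ (u ∈ S ∧ v ∈ S)) = indepFinset H := by
      ext S
      simp only [indepFinset, Finset.mem_filter, Finset.mem_univ, true_and]
      constructor
      · rintro ⟨hind, hnot⟩ a ha b hb hadj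
        by_cases h : s(a, b) = s(u, v)
        · rw [Sym2.eq_iff] at h
          rcases h with ⟨rfl, rfl⟩ | ⟨rfl, rfl⟩
          · exact hnot ⟨ha, hb⟩
          · exact hnot ⟨hb, ha⟩
        · exact hind a ha b hb
            (by rw [hH', SimpleGraph.deleteEdges_adj]; exact ⟨hadj, by simpa using h⟩)
      · intro hind
        exact ⟨fun a ha b hb hadj => hind a ha b hb hadj.1,
          fun ⟨hu, hv⟩ => hind u hu v hv hw⟩
    have hcard : ((indepFinset H').filter (fun S => u ∈ S ∧ v ∈ S)).card
        + (indepFinset H).card = (indepFinset H').card := by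
      rw [← hsplit]
      exact Finset.card_filter_add_card_filter_not _
    have h4 := four_mul_le H' u v huv
    have hstep : 3 * (indepFinset H').card ≤ 4 * (indepFinset H).card := by omega
    calc 3 ^ (e + 1) * 2 ^ Fintype.card V = 3 * (3 ^ e * 2 ^ Fintype.card V) := by ring
      _ ≤ 3 * (4 ^ e * (indepFinset H').card) := Nat.mul_le_mul_left _ hIH
      _ = 4 ^ e * (3 * (indepFinset H').card) := by ring
      _ ≤ 4 ^ e * (4 * (indepFinset H).card) := Nat.mul_le_mul_left _ hstep
      _ = 4 ^ (e + 1) * (indepFinset H).card := by ring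

theorem stmt_1 {V : Type*} [Fintype V] (H : SimpleGraph V) :
    (indepCount H : ℝ) ≥ 2 ^ (Fintype.card V) * (3 / 4) ^ (Nat.card H.edgeSet) := by
  have h := key (Nat.card H.edgeSet) H rfl
  rw [ge_iff_le, div_pow, ← mul_div_assoc, div_le_iff₀ (by positivity)]
  rw [indepCount_eq_card]
  calc (2:ℝ) ^ Fintype.card V * 3 ^ Nat.card H.edgeSet
      = ((3 ^ Nat.card H.edgeSet * 2 ^ Fintype.card V : ℕ) : ℝ) := by push_cast; ring
    _ ≤ ((4 ^ Nat.card H.edgeSet * (indepFinset H).card : ℕ) : ℝ) := by exact_mod_cast h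
    _ = ((indepFinset H).card : ℝ) * 4 ^ Nat.card H.edgeSet := by push_cast; ring
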